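/- arXiv:2503.21697 — 4 statements merged into one kernel-verified Lean document; each statement's English description precedes it below -/
import Mathlib

section
/- For formal series f, g : Σ* → ℚ and any letter a ∈ Σ, the right derivative of the shuffle product satisfies the Leibniz rule ∂ᵣᵃ(f ⧢ g) = (∂ᵣᵃ f) ⧢ g + f ⧢ (∂ᵣᵃ g). -/
/-- Left derivative of a formal series by a letter. -/
def lderiv {A : Type*} (a : A) (f : List A → ℚ) : List A → ℚ := fun w => f (a :: w)

/-- Right derivative of a formal series by a letter. -/
def rderiv {A : Type*} (a : A) (f : List A → ℚ) : List A → ℚ := fun w => f (w ++ [a])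

/-- Shuffle product of formal series. -/
def shuffle {A : Type*} : (List A → ℚ) → (List A → ℚ) → List A → ℚ
  | f, g, [] => f [] * g []
  | f, g, a :: w => shuffle (lderiv a f) g w + shuffle f (lderiv a g) w

/-- Infiltration product of formal series. -/
def infil {A : Type*} : (List A → ℚ) → (List A → ℚ) → List A → ℚ
  | f, g, [] => f [] * g []
  | f, g, a :: w =>
      infil (lderiv a f) g w + infil f (lderiv a g) w + infil (lderiv a f) (lderiv a g) w

/-- A series is commutative if its value depends only on the multiset of letters. -/
def IsCommutativeSeries {A : Type*} (f : List A → ℚ) : Prop :=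
  ∀ u v : List A, u.Perm v → f u = f v


lemma key {A : Type*} (a : A) : ∀ (w : List A) (f g : List A → ℚ),
    shuffle f g (w ++ [a]) = shuffle (rderiv a f) g w + shuffle f (rderiv a g) w := by
  intro w
  induction w with
  | nil => intro f g; simp [shuffle, rderiv, lderiv]
  | cons b w ih =>
    intro f g
    have h : ∀ h : List A → ℚ, lderiv b (rderiv a h) = rderiv a (lderiv b h) := by
      intro h; funext u; simp [rderiv, lderiv]
    simp only [List.cons_append, List.append_eq, shuffle, ih, h]
    ring

theorem stmt3 {A : Type*} [Fintype A] (f g : List A → ℚ) (a : A) :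
    rderiv a (shuffle f g) =
      fun w => shuffle (rderiv a f) g w + shuffle f (rderiv a g) w := by
  funext w
  exact key a w f g
end

section
/- For formal series f, g : Σ* → ℚ and any letter a ∈ Σ, the right derivative of the infiltration product satisfies ∂ᵣᵃ(f ↑ g) = (∂ᵣᵃ f) ↑ g + f ↑ (∂ᵣᵃ g) + (∂ᵣᵃ f) ↑ (∂ᵣᵃ g). -/
lemma infil_append_single {A : Type*} (a : A) :
    ∀ (w : List A) (f g : List A → ℚ),
      infil f g (w ++ [a]) = infil (rderiv a f) g w + infil f (rderiv a g) w +
        infil (rderiv a f) (rderiv a g) w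
  | [], f, g => by simp [infil, rderiv, lderiv]
  | b :: w, f, g => by
      have e1 : rderiv a (lderiv b f) = lderiv b (rderiv a f) := rfl
      have e2 : rderiv a (lderiv b g) = lderiv b (rderiv a g) := rfl
      simp only [List.cons_append, List.append_eq, infil, infil_append_single a w, e1, e2]
      ring

theorem stmt5 {A : Type*} [Fintype A] (f g : List A → ℚ) (a : A) :
    rderiv a (infil f g) =
      fun w => infil (rderiv a f) g w + infil f (rderiv a g) w +
        infil (rderiv a f) (rderiv a g) w := by
  funext w
  exact infil_append_single a w f g
end

section
/- For every letter a ∈ Σ, the map σₐ := id + ∂ₗᵃ is a ring endomorphism of the infiltration algebra of series: σₐ(c·f) = c·σₐ(f), σₐ(f + g) = σₐ(f) + σₐ(g), and σₐ(f ↑ g) = σₐ(f) ↑ σₐ(g). -/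
lemma infil_add_left {A : Type*} (f g h : List A → ℚ) (w : List A) :
    infil (fun u => f u + g u) h w = infil f h w + infil g h w := by
  induction w generalizing f g h with
  | nil => simp [infil]; ring
  | cons b w ih =>
      simp only [infil, lderiv]
      rw [show (lderiv b fun u => f u + g u) = fun u => lderiv b f u + lderiv b g u from rfl]
      rw [ih, ih, ih]
      ring

lemma infil_add_right {A : Type*} (f g h : List A → ℚ) (w : List A) :
    infil f (fun u => g u + h u) w = infil f g w + infil f h w := by
  induction w generalizing f g h with
  | nil => simp [infil]; ring
  | cons b w ih =>
      simp only [infil, lderiv]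
      rw [show (lderiv b fun u => g u + h u) = fun u => lderiv b g u + lderiv b h u from rfl]
      rw [ih, ih, ih]
      ring

theorem stmt6 {A : Type*} [Fintype A] (a : A) :
    (∀ (c : ℚ) (f : List A → ℚ),
        (fun w => (c • f) w + lderiv a (c • f) w) =
          fun w => c • ((fun u => f u + lderiv a f u) w)) ∧
    (∀ f g : List A → ℚ,
        (fun w => (f + g) w + lderiv a (f + g) w) =
          fun w => (f w + lderiv a f w) + (g w + lderiv a g w)) ∧
    (∀ f g : List A → ℚ,
        (fun w => infil f g w + lderiv a (infil f g) w) =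
          infil (fun w => f w + lderiv a f w) (fun w => g w + lderiv a g w)) := by
  refine ⟨?_, ?_, ?_⟩
  · intro c f
    funext w
    simp [lderiv, smul_eq_mul]
    ring
  · intro f g
    funext w
    simp [lderiv]
    ring
  · intro f g
    funext w
    have hl : lderiv a (infil f g) w
        = infil (lderiv a f) g w + infil f (lderiv a g) w
          + infil (lderiv a f) (lderiv a g) w := rfl
    rw [hl, infil_add_left, infil_add_right, infil_add_right]
    ring
end

section
/- The ring of formal series Σ* → ℚ under addition and shuffle product has no nontrivial zero divisors: if f ⧢ g = 0 then f = 0 or g = 0. -/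
section Aux

variable {A : Type*} [LinearOrder A]

def minMerge : List A → List A → List A
  | [], v => v
  | u, [] => u
  | a :: t, b :: s =>
      if a < b then a :: minMerge t (b :: s)
      else if b < a then b :: minMerge (a :: t) s
      else a :: min (minMerge t (b :: s)) (minMerge (a :: t) s)
termination_by u v => u.length + v.length

@[simp] lemma minMerge_nil_left (v : List A) : minMerge [] v = v := by
  cases v <;> simp [minMerge]

@[simp] lemma minMerge_nil_right (u : List A) : minMerge u [] = u := by
  cases u <;> simp [minMerge]

lemma minMerge_cons (a b : A) (t s : List A) :
    minMerge (a :: t) (b :: s) =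
      if a < b then a :: minMerge t (b :: s)
      else if b < a then b :: minMerge (a :: t) s
      else a :: min (minMerge t (b :: s)) (minMerge (a :: t) s) := by
  simp [minMerge]

lemma minMerge_length : ∀ u v : List A, (minMerge u v).length = u.length + v.length
  | [], v => by simp
  | a :: t, [] => by simp
  | a :: t, b :: s => by
      rw [minMerge_cons]
      have h1 := minMerge_length t (b :: s)
      have h2 := minMerge_length (a :: t) s
      rcases le_total (minMerge t (b :: s)) (minMerge (a :: t) s) with h | h <;>
        split_ifs <;> simp [min_def, h, h1, h2] <;> omega
termination_by u v => u.length + v.length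

def Below (u₀ : List A) (f : List A → ℚ) : Prop :=
  ∀ u : List A, u.length < u₀.length ∨ (u.length = u₀.length ∧ u < u₀) → f u = 0

lemma below_nil (f : List A → ℚ) : Below [] f := by
  rintro u (hu | ⟨h1, h2⟩)
  · simp at hu
  · exact absurd h2 (List.not_lt_nil _)

lemma Below.short {u₀ : List A} {f : List A → ℚ} (h : Below u₀ f) {u : List A}
    (hu : u.length < u₀.length) : f u = 0 := h u (Or.inl hu)

lemma Below.lt {u₀ : List A} {f : List A → ℚ} (h : Below u₀ f) {u : List A}
    (h1 : u.length = u₀.length) (h2 : u < u₀) : f u = 0 := h u (Or.inr ⟨h1, h2⟩)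

lemma Below.lderiv_head {a : A} {t : List A} {f : List A → ℚ} (h : Below (a :: t) f) :
    Below t (lderiv a f) := by
  intro u hu
  rcases hu with hu | ⟨h1, h2⟩
  · exact h.short (by simpa using Nat.succ_lt_succ hu)
  · exact h.lt (by simpa using h1) (List.Lex.cons h2)

lemma Below.lderiv_lt {a b : A} {s₀ : List A} {f : List A → ℚ} (h : Below (a :: s₀) f)
    (hba : b < a) {v : List A} (hv : v.length ≤ s₀.length) : lderiv b f v = 0 := by
  rcases lt_or_eq_of_le hv with hv | hv
  · exact h.short (by simpa using Nat.succ_lt_succ hv)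
  · exact h.lt (by simpa using hv) (List.Lex.rel hba)

set_option linter.unusedSectionVars false

lemma shuffle_eq_zero (w : List A) : ∀ (f g : List A → ℚ),
    (∀ u v : List A, u.length + v.length = w.length → f u = 0 ∨ g v = 0) →
    shuffle f g w = 0 := by
  induction w with
  | nil =>
      intro f g H
      rcases H [] [] rfl with h | h <;> simp [shuffle, h]
  | cons a w ih =>
      intro f g H
      have h1 : shuffle (lderiv a f) g w = 0 := by
        refine ih _ _ fun u v huv => ?_
        rcases H (a :: u) v (by simp [huv.symm]; omega) with h | h
        · exact Or.inl h
        · exact Or.inr h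
      have h2 : shuffle f (lderiv a g) w = 0 := by
        refine ih _ _ fun u v huv => ?_
        rcases H u (a :: v) (by simp; omega) with h | h
        · exact Or.inl h
        · exact Or.inr h
      simp [shuffle, h1, h2]

lemma lex_cons_inv {b c : A} {w' M' : List A} (h : (b :: w' : List A) < c :: M') :
    b < c ∨ (b = c ∧ w' < M') := by
  rcases h with h | h
  · exact Or.inl (by assumption)
  · exact Or.inr ⟨rfl, by assumption⟩

/-- Key vanishing lemma: below the minimal merge the shuffle vanishes. -/
lemma shuffle_eq_zero_of_lt_minMerge :
    ∀ (w : List A) (f g : List A → ℚ) (u₀ v₀ : List A),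
    Below u₀ f → Below v₀ g → w.length = u₀.length + v₀.length →
    w < minMerge u₀ v₀ → shuffle f g w = 0 := by
  intro w
  induction w with
  | nil =>
      intro f g u₀ v₀ hf hg hlen hlt
      simp only [List.length_nil] at hlen
      have hu : u₀ = [] := List.length_eq_zero_iff.mp (by omega)
      have hv : v₀ = [] := List.length_eq_zero_iff.mp (by omega)
      rw [hu, hv, minMerge_nil_left] at hlt
      exact absurd hlt (List.not_lt_nil _)
  | cons b w' ih =>
      intro f g u₀ v₀ hf hg hlen hlt
      match u₀, v₀ with
      | [], [] => simp at hlen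
      | [], d :: s₀ =>
          simp only [minMerge_nil_left] at hlt
          simp only [List.length_nil, List.length_cons, zero_add, List.length_cons] at hlen
          rcases lex_cons_inv hlt with hbd | ⟨rfl, hw'⟩
          · have h1 : shuffle (lderiv b f) g w' = 0 := by
              refine shuffle_eq_zero _ _ _ fun u v huv => Or.inr (hg.short ?_)
              simp only [List.length_nil, List.length_cons, zero_add] at hlen ⊢; omega
            have h2 : shuffle f (lderiv b g) w' = 0 := by
              refine shuffle_eq_zero _ _ _ fun u v huv => Or.inr (hg.lderiv_lt hbd ?_)
              simp at hlen; omega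
            simp [shuffle, h1, h2]
          · have h1 : shuffle (lderiv b f) g w' = 0 := by
              refine shuffle_eq_zero _ _ _ fun u v huv => Or.inr (hg.short ?_)
              simp only [List.length_nil, List.length_cons, zero_add] at hlen ⊢; omega
            have h2 : shuffle f (lderiv b g) w' = 0 := by
              refine ih f (lderiv b g) [] s₀ (below_nil f) hg.lderiv_head ?_ ?_
              · simp only [List.length_nil, List.length_cons, zero_add] at hlen ⊢; omega
              · simpa using hw'
            simp [shuffle, h1, h2]
      | a :: t₀, [] =>
          simp only [minMerge_nil_right] at hlt
          rcases lex_cons_inv hlt with hba | ⟨rfl, hw'⟩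
          · have h1 : shuffle (lderiv b f) g w' = 0 := by
              refine shuffle_eq_zero _ _ _ fun u v huv => Or.inl (hf.lderiv_lt hba ?_)
              simp at hlen; omega
            have h2 : shuffle f (lderiv b g) w' = 0 := by
              refine shuffle_eq_zero _ _ _ fun u v huv => Or.inl (hf.short ?_)
              simp only [List.length_nil, List.length_cons, zero_add] at hlen ⊢; omega
            simp [shuffle, h1, h2]
          · have h1 : shuffle (lderiv b f) g w' = 0 := by
              refine ih (lderiv b f) g t₀ [] hf.lderiv_head (below_nil g) ?_ ?_
              · simp only [List.length_nil, List.length_cons, zero_add] at hlen ⊢; omega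
              · simpa using hw'
            have h2 : shuffle f (lderiv b g) w' = 0 := by
              refine shuffle_eq_zero _ _ _ fun u v huv => Or.inl (hf.short ?_)
              simp only [List.length_nil, List.length_cons, zero_add] at hlen ⊢; omega
            simp [shuffle, h1, h2]
      | a :: t₀, d :: s₀ =>
          rw [minMerge_cons] at hlt
          simp only [List.length_cons] at hlen
          rcases lt_trichotomy a d with had | had | had
          · rw [if_pos had] at hlt
            rcases lex_cons_inv hlt with hba | ⟨rfl, hw'⟩
            · -- b < a < d
              have h1 : shuffle (lderiv b f) g w' = 0 := by
                refine shuffle_eq_zero _ _ _ fun u v huv => ?_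
                by_cases hu : u.length ≤ t₀.length
                · exact Or.inl (hf.lderiv_lt hba hu)
                · exact Or.inr (hg.short (by simp only [List.length_cons]; omega))
              have h2 : shuffle f (lderiv b g) w' = 0 := by
                refine shuffle_eq_zero _ _ _ fun u v huv => ?_
                by_cases hv : v.length ≤ s₀.length
                · exact Or.inr (hg.lderiv_lt (hba.trans had) hv)
                · exact Or.inl (hf.short (by simp only [List.length_cons]; omega))
              simp [shuffle, h1, h2]
            · -- b = a < d
              have h1 : shuffle (lderiv b f) g w' = 0 := by
                refine ih (lderiv b f) g t₀ (d :: s₀) hf.lderiv_head hg ?_ hw'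
                simp only [List.length_nil, List.length_cons, zero_add] at hlen ⊢; omega
              have h2 : shuffle f (lderiv b g) w' = 0 := by
                refine shuffle_eq_zero _ _ _ fun u v huv => ?_
                by_cases hv : v.length ≤ s₀.length
                · exact Or.inr (hg.lderiv_lt had hv)
                · exact Or.inl (hf.short (by simp only [List.length_cons]; omega))
              simp [shuffle, h1, h2]
          · -- a = d
            subst had
            rw [if_neg (lt_irrefl a), if_neg (lt_irrefl a)] at hlt
            rcases lex_cons_inv hlt with hba | ⟨rfl, hw'⟩
            · have h1 : shuffle (lderiv b f) g w' = 0 := by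
                refine shuffle_eq_zero _ _ _ fun u v huv => ?_
                by_cases hu : u.length ≤ t₀.length
                · exact Or.inl (hf.lderiv_lt hba hu)
                · exact Or.inr (hg.short (by simp only [List.length_cons]; omega))
              have h2 : shuffle f (lderiv b g) w' = 0 := by
                refine shuffle_eq_zero _ _ _ fun u v huv => ?_
                by_cases hv : v.length ≤ s₀.length
                · exact Or.inr (hg.lderiv_lt hba hv)
                · exact Or.inl (hf.short (by simp only [List.length_cons]; omega))
              simp [shuffle, h1, h2]
            · rw [lt_min_iff] at hw'
              have h1 : shuffle (lderiv b f) g w' = 0 := by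
                refine ih (lderiv b f) g t₀ (b :: s₀) hf.lderiv_head hg ?_ hw'.1
                simp only [List.length_nil, List.length_cons, zero_add] at hlen ⊢; omega
              have h2 : shuffle f (lderiv b g) w' = 0 := by
                refine ih f (lderiv b g) (b :: t₀) s₀ hf hg.lderiv_head ?_ hw'.2
                simp only [List.length_nil, List.length_cons, zero_add] at hlen ⊢; omega
              simp [shuffle, h1, h2]
          · -- d < a
            rw [if_neg (asymm had), if_pos had] at hlt
            rcases lex_cons_inv hlt with hbd | ⟨rfl, hw'⟩
            · have h1 : shuffle (lderiv b f) g w' = 0 := by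
                refine shuffle_eq_zero _ _ _ fun u v huv => ?_
                by_cases hu : u.length ≤ t₀.length
                · exact Or.inl (hf.lderiv_lt (hbd.trans had) hu)
                · exact Or.inr (hg.short (by simp only [List.length_cons]; omega))
              have h2 : shuffle f (lderiv b g) w' = 0 := by
                refine shuffle_eq_zero _ _ _ fun u v huv => ?_
                by_cases hv : v.length ≤ s₀.length
                · exact Or.inr (hg.lderiv_lt hbd hv)
                · exact Or.inl (hf.short (by simp only [List.length_cons]; omega))
              simp [shuffle, h1, h2]
            · have h1 : shuffle (lderiv b f) g w' = 0 := by
                refine shuffle_eq_zero _ _ _ fun u v huv => ?_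
                by_cases hu : u.length ≤ t₀.length
                · exact Or.inl (hf.lderiv_lt had hu)
                · exact Or.inr (hg.short (by simp only [List.length_cons]; omega))
              have h2 : shuffle f (lderiv b g) w' = 0 := by
                refine ih f (lderiv b g) (a :: t₀) s₀ hf hg.lderiv_head ?_ hw'
                simp only [List.length_nil, List.length_cons, zero_add] at hlen ⊢; omega
              simp [shuffle, h1, h2]

lemma shuffle_minMerge : ∀ (n : ℕ) (u₀ v₀ : List A), u₀.length + v₀.length = n →
    ∀ (f g : List A → ℚ), Below u₀ f → Below v₀ g →
    ∃ N : ℕ, 0 < N ∧ shuffle f g (minMerge u₀ v₀) = N * (f u₀ * g v₀) := by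
  intro n
  induction n using Nat.strong_induction_on with
  | _ n ih =>
    intro u₀ v₀ hn f g hf hg
    match u₀, v₀ with
    | [], [] =>
        exact ⟨1, one_pos, by simp [minMerge_nil_left, shuffle]⟩
    | [], d :: s₀ =>
        simp only [List.length_nil, List.length_cons, zero_add] at hn
        have h1 : shuffle (lderiv d f) g s₀ = 0 := by
          refine shuffle_eq_zero _ _ _ fun u v huv => Or.inr (hg.short ?_)
          simp only [List.length_cons]; omega
        obtain ⟨N, hN, hval⟩ := ih s₀.length (by omega) [] s₀ (by simp) f (lderiv d g)
          (below_nil f) hg.lderiv_head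
        rw [minMerge_nil_left] at hval
        exact ⟨N, hN, by rw [minMerge_nil_left]; simp [shuffle, h1, hval, lderiv]⟩
    | a :: t₀, [] =>
        simp only [List.length_nil, List.length_cons, add_zero] at hn
        have h2 : shuffle f (lderiv a g) t₀ = 0 := by
          refine shuffle_eq_zero _ _ _ fun u v huv => Or.inl (hf.short ?_)
          simp only [List.length_cons]; omega
        obtain ⟨N, hN, hval⟩ := ih t₀.length (by omega) t₀ [] (by simp) (lderiv a f) g
          hf.lderiv_head (below_nil g)
        rw [minMerge_nil_right] at hval
        exact ⟨N, hN, by rw [minMerge_nil_right]; simp [shuffle, h2, hval, lderiv]⟩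
    | a :: t₀, d :: s₀ =>
        simp only [List.length_cons] at hn
        have hlen1 := minMerge_length t₀ (d :: s₀)
        have hlen2 := minMerge_length (a :: t₀) s₀
        simp only [List.length_cons] at hlen1 hlen2
        rcases lt_trichotomy a d with had | had | had
        · rw [minMerge_cons, if_pos had]
          have h2 : shuffle f (lderiv a g) (minMerge t₀ (d :: s₀)) = 0 := by
            refine shuffle_eq_zero _ _ _ fun u v huv => ?_
            by_cases hv : v.length ≤ s₀.length
            · exact Or.inr (hg.lderiv_lt had hv)
            · exact Or.inl (hf.short (by simp only [List.length_cons]; omega))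
          obtain ⟨N, hN, hval⟩ := ih (t₀.length + (s₀.length + 1)) (by omega) t₀ (d :: s₀)
            (by simp) (lderiv a f) g hf.lderiv_head hg
          exact ⟨N, hN, by simp [shuffle, h2, hval, lderiv]⟩
        · subst had
          rw [minMerge_cons, if_neg (lt_irrefl a), if_neg (lt_irrefl a)]
          rcases lt_trichotomy (minMerge t₀ (a :: s₀)) (minMerge (a :: t₀) s₀) with hM | hM | hM
          · rw [min_eq_left hM.le]
            have h2 : shuffle f (lderiv a g) (minMerge t₀ (a :: s₀)) = 0 := by
              refine shuffle_eq_zero_of_lt_minMerge _ f (lderiv a g) (a :: t₀) s₀ hf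
                hg.lderiv_head ?_ hM
              simp only [List.length_cons]; omega
            obtain ⟨N, hN, hval⟩ := ih (t₀.length + (s₀.length + 1)) (by omega) t₀ (a :: s₀)
              (by simp) (lderiv a f) g hf.lderiv_head hg
            exact ⟨N, hN, by simp [shuffle, h2, hval, lderiv]⟩
          · rw [hM, min_self]
            obtain ⟨N₁, hN₁, hval₁⟩ := ih (t₀.length + (s₀.length + 1)) (by omega) t₀ (a :: s₀)
              (by simp) (lderiv a f) g hf.lderiv_head hg
            obtain ⟨N₂, hN₂, hval₂⟩ := ih (t₀.length + 1 + s₀.length) (by omega) (a :: t₀) s₀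
              (by simp) f (lderiv a g) hf hg.lderiv_head
            rw [hM] at hval₁
            refine ⟨N₁ + N₂, by omega, ?_⟩
            simp only [shuffle, hval₁, hval₂, lderiv]
            push_cast
            ring
          · rw [min_eq_right hM.le]
            have h1 : shuffle (lderiv a f) g (minMerge (a :: t₀) s₀) = 0 := by
              refine shuffle_eq_zero_of_lt_minMerge _ (lderiv a f) g t₀ (a :: s₀)
                hf.lderiv_head hg ?_ hM
              simp only [List.length_cons]; omega
            obtain ⟨N, hN, hval⟩ := ih (t₀.length + 1 + s₀.length) (by omega) (a :: t₀) s₀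
              (by simp) f (lderiv a g) hf hg.lderiv_head
            exact ⟨N, hN, by simp [shuffle, h1, hval, lderiv]⟩
        · rw [minMerge_cons, if_neg (asymm had), if_pos had]
          have h1 : shuffle (lderiv d f) g (minMerge (a :: t₀) s₀) = 0 := by
            refine shuffle_eq_zero _ _ _ fun u v huv => ?_
            by_cases hu : u.length ≤ t₀.length
            · exact Or.inl (hf.lderiv_lt had hu)
            · exact Or.inr (hg.short (by simp only [List.length_cons]; omega))
          obtain ⟨N, hN, hval⟩ := ih (t₀.length + 1 + s₀.length) (by omega) (a :: t₀) s₀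
            (by simp) f (lderiv d g) hf hg.lderiv_head
          exact ⟨N, hN, by simp [shuffle, h1, hval, lderiv]⟩

lemma exists_below [Finite A] (f : List A → ℚ) (hf : f ≠ 0) :
    ∃ u₀, Below u₀ f ∧ f u₀ ≠ 0 := by
  classical
  have hex : ∃ n, ∃ u : List A, u.length = n ∧ f u ≠ 0 := by
    obtain ⟨u, hu⟩ := Function.ne_iff.mp hf
    exact ⟨u.length, u, rfl, by simpa using hu⟩
  obtain ⟨u1, hu1len, hu1⟩ := Nat.find_spec hex
  have hfin : {u : List A | u.length = Nat.find hex ∧ f u ≠ 0}.Finite :=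
    (List.finite_length_eq A (Nat.find hex)).subset fun u hu => hu.1
  obtain ⟨u₀, hu₀S, hmin⟩ := Set.exists_min_image _ id hfin ⟨u1, hu1len, hu1⟩
  refine ⟨u₀, ?_, hu₀S.2⟩
  rintro u (hu | ⟨h1, h2⟩)
  · by_contra hne
    exact Nat.find_min hex (show u.length < Nat.find hex by rw [← hu₀S.1]; exact hu)
      ⟨u, rfl, hne⟩
  · by_contra hne
    have hle : u₀ ≤ u := hmin u ⟨by rw [← hu₀S.1]; exact h1, hne⟩
    exact absurd h2 (not_lt.mpr hle)

end Aux

theorem stmt9 {A : Type*} [Fintype A] (f g : List A → ℚ)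
    (h : shuffle f g = 0) : f = 0 ∨ g = 0 := by
  by_contra hcon
  push_neg at hcon
  classical
  letI : LinearOrder A :=
    LinearOrder.lift' (Fintype.equivFin A) (Fintype.equivFin A).injective
  obtain ⟨u₀, hfB, hfu⟩ := exists_below f hcon.1
  obtain ⟨v₀, hgB, hgv⟩ := exists_below g hcon.2
  obtain ⟨N, hN, hval⟩ := shuffle_minMerge (u₀.length + v₀.length) u₀ v₀ rfl f g hfB hgB
  rw [h] at hval
  simp only [Pi.zero_apply] at hval
  have hNz : (N : ℚ) ≠ 0 := Nat.cast_ne_zero.mpr hN.ne'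
  exact (mul_ne_zero hNz (mul_ne_zero hfu hgv)) hval.symm
end
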